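/- For every n ≥ 2, R_{3,2}(K_{1,2}, K_{1,n}, K_{1,n}) = n + 1. -/

import Mathlib

open SimpleGraph Finset

lemma star_aux {N m : ℕ} (χ : Sym2 (Fin N) → Finset (Fin 3)) (i : Fin 3)
    (v : Fin N) (S : Finset (Fin N)) (hv : v ∉ S) (hS : m ≤ S.card)
    (hcol : ∀ u ∈ S, i ∈ χ s(v, u)) :
    ∃ f : Unit ⊕ Fin m → Fin N, Function.Injective f ∧
      ∀ u w, (completeBipartiteGraph Unit (Fin m)).Adj u w → i ∈ χ s(f u, f w) := by
  obtain ⟨T, hTS, hT⟩ := Finset.exists_subset_card_eq hS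
  have e : T ≃ Fin m := T.equivFinOfCardEq hT
  refine ⟨Sum.elim (fun _ => v) (fun k => ((e.symm k : T) : Fin N)), ?_, ?_⟩
  · rintro (a | a) (b | b) h
    · rfl
    · simp only [Sum.elim_inl, Sum.elim_inr] at h
      exact absurd (hTS (e.symm b).2) (by rw [← h]; exact hv)
    · simp only [Sum.elim_inl, Sum.elim_inr] at h
      exact absurd (hTS (e.symm a).2) (by rw [h]; exact hv)
    · simp only [Sum.elim_inr] at h
      have : e.symm a = e.symm b := Subtype.ext h
      simpa using congrArg e this
  · rintro (a | a) (b | b) hadj <;> simp only [completeBipartiteGraph] at hadj <;>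
      simp only [Sum.elim_inl, Sum.elim_inr]
    · simp at hadj
    · exact hcol _ (hTS (e.symm b).2)
    · rw [Sym2.eq_swap]; exact hcol _ (hTS (e.symm a).2)
    · simp at hadj

theorem setRamsey_three_two_stars (n : ℕ) (hn : 2 ≤ n) :
    IsLeast {N : ℕ | ∀ χ : Sym2 (Fin N) → Finset (Fin 3),
      (∀ e : Sym2 (Fin N), ¬ e.IsDiag → (χ e).card = 2) →
      ((∃ f : Unit ⊕ Fin 2 → Fin N, Function.Injective f ∧
          ∀ u v, (completeBipartiteGraph Unit (Fin 2)).Adj u v →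
            (0 : Fin 3) ∈ χ s(f u, f v)) ∨
       (∃ f : Unit ⊕ Fin n → Fin N, Function.Injective f ∧
          ∀ u v, (completeBipartiteGraph Unit (Fin n)).Adj u v →
            (1 : Fin 3) ∈ χ s(f u, f v)) ∨
       (∃ f : Unit ⊕ Fin n → Fin N, Function.Injective f ∧
          ∀ u v, (completeBipartiteGraph Unit (Fin n)).Adj u v →
            (2 : Fin 3) ∈ χ s(f u, f v)))} (n + 1) := by
  constructor
  · intro χ hχ
    have hn1 : (0:ℕ) < n + 1 := Nat.succ_pos n
    set v : Fin (n + 1) := ⟨0, hn1⟩ with hv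
    set T := (univ : Finset (Fin (n + 1))).erase v with hT
    have hTcard : T.card = n := by
      rw [hT, card_erase_of_mem (mem_univ v)]; simp
    have hcard2 : ∀ u ∈ T, (χ s(v, u)).card = 2 := by
      intro u hu
      refine hχ _ ?_
      rw [Sym2.mk_isDiag_iff]
      exact fun h => (Finset.ne_of_mem_erase hu) h.symm
    have key : ∀ s : Finset (Fin 3), s.card = 2 →
        (((0:Fin 3) ∉ s → (1:Fin 3) ∈ s ∧ (2:Fin 3) ∈ s) ∧
          ((1:Fin 3) ∈ s ∨ (2:Fin 3) ∈ s)) := by decide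
    set A := T.filter (fun u => (0:Fin 3) ∈ χ s(v, u)) with hA
    set B := T.filter (fun u => (1:Fin 3) ∈ χ s(v, u)) with hB
    set C := T.filter (fun u => (2:Fin 3) ∈ χ s(v, u)) with hC
    have hvT : v ∉ T := notMem_erase v _
    by_cases h2 : 2 ≤ A.card
    · left
      exact star_aux χ 0 v A (fun h => hvT (mem_of_mem_filter v h)) h2
        (fun u hu => (mem_filter.1 hu).2)
    · have hA1 : A.card ≤ 1 := by omega
      have hU : T ⊆ B ∪ C := by
        intro u hu
        rcases (key _ (hcard2 u hu)).2 with h | h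
        · exact mem_union_left _ (mem_filter.2 ⟨hu, h⟩)
        · exact mem_union_right _ (mem_filter.2 ⟨hu, h⟩)
      have hI : T \ A ⊆ B ∩ C := by
        intro u hu
        rw [mem_sdiff] at hu
        have h0 : (0:Fin 3) ∉ χ s(v, u) := fun h => hu.2 (mem_filter.2 ⟨hu.1, h⟩)
        obtain ⟨h1, h2'⟩ := (key _ (hcard2 u hu.1)).1 h0
        exact mem_inter.2 ⟨mem_filter.2 ⟨hu.1, h1⟩, mem_filter.2 ⟨hu.1, h2'⟩⟩
      have c1 : n ≤ (B ∪ C).card := by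
        have := card_le_card hU; rwa [hTcard] at this
      have c2 : n - 1 ≤ (B ∩ C).card := by
        have := card_le_card hI
        have := Finset.le_card_sdiff A T
        omega
      have csum : B.card + C.card = (B ∪ C).card + (B ∩ C).card :=
        (card_union_add_card_inter B C).symm
      have : n ≤ B.card ∨ n ≤ C.card := by omega
      rcases this with h | h
      · exact Or.inr (Or.inl (star_aux χ 1 v B
          (fun hh => hvT (mem_of_mem_filter v hh)) h (fun u hu => (mem_filter.1 hu).2)))
      · exact Or.inr (Or.inr (star_aux χ 2 v C
          (fun hh => hvT (mem_of_mem_filter v hh)) h (fun u hu => (mem_filter.1 hu).2)))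
  · intro N hN
    by_contra hlt
    push_neg at hlt
    have hNn : N ≤ n := by omega
    have hc : ({1, 2} : Finset (Fin 3)).card = 2 := by decide
    have := hN (fun _ => ({1, 2} : Finset (Fin 3))) (fun e _ => hc)
    rcases this with ⟨f, hf, hcol⟩ | ⟨f, hf, _⟩ | ⟨f, hf, _⟩
    · have := hcol (Sum.inl ()) (Sum.inr 0) (by simp)
      simp at this
    all_goals {
      have := Fintype.card_le_of_injective f hf
      simp [Fintype.card_sum] at this
      omega }
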